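/- Let L1, L2 be two-dimensional vector spaces over ℂ, let q be a quadratic form on L1 ⊗ L2 whose zero set is exactly the set of product vectors, and let L12 ⊂ L1 ⊗ L2 be a two-dimensional subspace with rank L12 = 2. Then there exist a basis {x1, y1} of L1 and a basis {x2, y2} of L2 such that L12 = span{x1 ⊗ x2, y1 ⊗ y2}; moreover every product vector in L12 is of the form λ·(x1 ⊗ x2) or λ·(y1 ⊗ y2) for some λ ∈ ℂ. -/

import Mathlib

open TensorProduct

section Aux
open QuadraticMap Polynomial

lemma quad_root (A B C : ℂ) (hA : A ≠ 0) : ∃ t : ℂ, A*t^2 + B*t + C = 0 := by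
  have hp : (0:WithBot ℕ) < (Polynomial.C A * X^2 + Polynomial.C B * X + Polynomial.C C).degree := by
    have : (Polynomial.C A * X^2 + Polynomial.C B * X + Polynomial.C C).degree = 2 := by
      compute_degree!
    rw [this]; norm_num
  obtain ⟨t, ht⟩ := Complex.exists_root hp
  exact ⟨t, by simpa [Polynomial.IsRoot, eval_add, eval_mul, eval_pow] using ht⟩

lemma iso_exists {N : Type*} [AddCommGroup N] [Module ℂ N] [Module.Finite ℂ N]
    (Q : QuadraticForm ℂ N) (h12 : Module.finrank ℂ N = 2) :
    ∃ e : N, Q e = 0 ∧ e ≠ 0 := by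
  set b := Module.finBasisOfFinrankEq ℂ N h12 with hb
  by_cases hu : Q (b 0) = 0
  · exact ⟨b 0, hu, b.ne_zero 0⟩
  by_cases hv : Q (b 1) = 0
  · exact ⟨b 1, hv, b.ne_zero 1⟩
  obtain ⟨t, ht⟩ := quad_root (Q (b 1)) (polar Q (b 0) (b 1)) (Q (b 0)) hv
  refine ⟨b 0 + t • b 1, ?_, ?_⟩
  · have h1 : Q (b 0 + t • b 1) = Q (b 0) + Q (t • b 1) + polar Q (b 0) (t • b 1) := by
      rw [QuadraticMap.polar]; ring
    rw [h1, QuadraticMap.map_smul, polar_smul_right]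
    simp only [smul_eq_mul]
    linear_combination ht
  · intro h
    have := congrArg (fun z => b.repr z 0) h
    simp [Finsupp.single_eq_of_ne] at this

/-- key structure: two isotropic vectors in L12 with nonzero polar pairing. -/
lemma key {M : Type*} [AddCommGroup M] [Module ℂ M]
    (q : QuadraticForm ℂ M) (L12 : Submodule ℂ M) (h12 : Module.finrank ℂ L12 = 2)
    (hrank : Module.finrank ℂ (LinearMap.range (QuadraticMap.polarBilin (q.comp L12.subtype))) = 2) :
    ∃ E F : M, E ∈ L12 ∧ F ∈ L12 ∧ q E = 0 ∧ q F = 0 ∧ polar q E F ≠ 0 ∧ E ≠ 0 := by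
  haveI : Module.Finite ℂ L12 := Module.finite_of_finrank_eq_succ h12
  set Q : QuadraticForm ℂ L12 := q.comp L12.subtype with hQdef
  have hQapp : ∀ x : L12, Q x = q (x : M) := fun x => rfl
  have hpol : ∀ x y : L12, polar Q x y = polar q (x : M) (y : M) := fun x y => by
    simp [QuadraticMap.polar, hQapp]
  -- nondegeneracy
  have hnd : ∀ x : L12, x ≠ 0 → QuadraticMap.polarBilin Q x ≠ 0 := by
    have hker : LinearMap.ker (QuadraticMap.polarBilin Q) = ⊥ := by
      have h3 := LinearMap.finrank_range_add_finrank_ker (QuadraticMap.polarBilin Q)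
      rw [hrank, h12] at h3
      exact Submodule.finrank_eq_zero.mp (by omega)
    intro x hx h
    exact hx (by rwa [← LinearMap.map_eq_zero_iff _ (LinearMap.ker_eq_bot.mp hker)])
  obtain ⟨e, hqe, hene⟩ := iso_exists Q h12
  obtain ⟨w, hw⟩ : ∃ w : L12, polar Q e w ≠ 0 := by
    by_contra h
    push_neg at h
    exact hnd e hene (LinearMap.ext fun y => h y)
  set t : ℂ := -(Q w) / polar Q e w with htdef
  set f : L12 := w + t • e with hfdef
  have hqf : Q f = 0 := by
    have h1 : Q (w + t • e) = Q w + Q (t • e) + polar Q w (t • e) := by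
      rw [QuadraticMap.polar]; ring
    rw [hfdef, h1, QuadraticMap.map_smul, polar_smul_right, polar_comm, hqe]
    simp only [smul_eq_mul, htdef]
    field_simp
    ring
  have hpef : polar Q e f ≠ 0 := by
    have : polar Q e f = polar Q e w + t * (2 • Q e) := by
      rw [hfdef, polar_add_right, polar_smul_right, polar_self, smul_eq_mul]
    rw [this, hqe]
    simpa using hw
  refine ⟨(e : M), (f : M), e.2, f.2, ?_, ?_, ?_, ?_⟩
  · rw [← hQapp]; exact hqe
  · rw [← hQapp]; exact hqf
  · rw [← hpol]; exact hpef
  · simpa using hene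

end Aux
open QuadraticMap

/-- The rank of the restriction of a quadratic form `q` on `M` to a submodule `L`,
defined as the rank of the polar (bilinear) form of the restriction. -/
noncomputable def quadRankOn {M : Type*} [AddCommGroup M] [Module ℂ M]
    (q : QuadraticForm ℂ M) (L : Submodule ℂ M) : ℕ :=
  Module.finrank ℂ (LinearMap.range (QuadraticMap.polarBilin (q.comp L.subtype)))

theorem stmt_2 {L1 L2 : Type*} [AddCommGroup L1] [Module ℂ L1]
    [AddCommGroup L2] [Module ℂ L2]
    (h1 : Module.finrank ℂ L1 = 2) (h2 : Module.finrank ℂ L2 = 2)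
    (q : QuadraticForm ℂ (L1 ⊗[ℂ] L2))
    (hq : ∀ v : L1 ⊗[ℂ] L2, q v = 0 ↔ ∃ (x : L1) (y : L2), v = x ⊗ₜ[ℂ] y)
    (L12 : Submodule ℂ (L1 ⊗[ℂ] L2)) (h12 : Module.finrank ℂ L12 = 2)
    (hrank : quadRankOn q L12 = 2) :
    ∃ (b1 : Module.Basis (Fin 2) ℂ L1) (b2 : Module.Basis (Fin 2) ℂ L2),
      L12 = Submodule.span ℂ {b1 0 ⊗ₜ[ℂ] b2 0, b1 1 ⊗ₜ[ℂ] b2 1} ∧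
      ∀ v ∈ L12, (∃ (x : L1) (y : L2), v = x ⊗ₜ[ℂ] y) →
        ∃ c : ℂ, v = c • (b1 0 ⊗ₜ[ℂ] b2 0) ∨ v = c • (b1 1 ⊗ₜ[ℂ] b2 1) := by
  haveI : Module.Finite ℂ L12 := Module.finite_of_finrank_eq_succ h12
  haveI : Module.Finite ℂ L1 := Module.finite_of_finrank_eq_succ h1
  haveI : Module.Finite ℂ L2 := Module.finite_of_finrank_eq_succ h2
  obtain ⟨E, F, hEL, hFL, hqE, hqF, hEF, hE0⟩ := key q L12 h12 hrank
  have hF0 : F ≠ 0 := fun h => hEF (by simp [h, polar_zero_right])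
  -- independence of E, F
  have hli : LinearIndependent ℂ ![E, F] := by
    rw [LinearIndependent.pair_iff]
    intro s t hst
    have h1' : polar q E (s • E + t • F) = 0 := by rw [hst]; simp [polar_zero_right]
    rw [polar_add_right, polar_smul_right, polar_smul_right, polar_self, hqE] at h1'
    simp only [smul_eq_mul, smul_zero, mul_zero, zero_add] at h1'
    have ht : t = 0 := by
      rcases mul_eq_zero.mp h1' with h | h
      · exact h
      · exact absurd h hEF
    subst ht
    simp only [zero_smul, add_zero, smul_eq_zero] at hst
    exact ⟨hst.resolve_right hE0, rfl⟩
  -- span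
  have hspan : Submodule.span ℂ {E, F} = L12 := by
    apply Submodule.eq_of_le_of_finrank_le
    · rw [Submodule.span_le]
      intro z hz
      rcases hz with h | h
      · rw [h]; exact hEL
      · rw [Set.mem_singleton_iff.mp h]; exact hFL
    · rw [h12]
      have hr : Set.range ![E, F] = {E, F} := by
        ext z; simp [Matrix.range_cons, Matrix.range_empty]; tauto
      have := finrank_span_eq_card hli
      rw [hr] at this
      rw [this]
      simp
  -- product decompositions
  obtain ⟨x1, x2, hE⟩ := (hq E).mp hqE
  obtain ⟨y1, y2, hF⟩ := (hq F).mp hqF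
  have hx1 : x1 ≠ 0 := fun h => hE0 (by simp [hE, h])
  have hy1 : y1 ≠ 0 := fun h => hF0 (by simp [hF, h])
  have hx2 : x2 ≠ 0 := fun h => hE0 (by simp [hE, h])
  have hy2 : y2 ≠ 0 := fun h => hF0 (by simp [hF, h])
  -- polar via sums
  have hpolEF : ∀ w : L1 ⊗[ℂ] L2, E + F = w → q w = 0 → False := by
    intro w hw hqw
    apply hEF
    have : polar q E F = q (E + F) - q E - q F := rfl
    rw [this, hw, hqw, hqE, hqF]; ring
  have h11 : LinearIndependent ℂ ![x1, y1] := by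
    rw [LinearIndependent.pair_iff' hx1]
    intro a ha
    refine hpolEF (x1 ⊗ₜ[ℂ] (x2 + a • y2)) ?_ ((hq _).mpr ⟨_, _, rfl⟩)
    simp [hE, hF, ← ha, tmul_add, tmul_smul, smul_tmul']
  have h22 : LinearIndependent ℂ ![x2, y2] := by
    rw [LinearIndependent.pair_iff' hx2]
    intro a ha
    refine hpolEF ((x1 + a • y1) ⊗ₜ[ℂ] x2) ?_ ((hq _).mpr ⟨_, _, rfl⟩)
    simp [hE, hF, ← ha, add_tmul, tmul_smul, smul_tmul']
  -- bases
  have hc1 : Fintype.card (Fin 2) = Module.finrank ℂ L1 := by simp [h1]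
  have hc2 : Fintype.card (Fin 2) = Module.finrank ℂ L2 := by simp [h2]
  set b1 := basisOfLinearIndependentOfCardEqFinrank h11 hc1 with hb1
  set b2 := basisOfLinearIndependentOfCardEqFinrank h22 hc2 with hb2
  have hb10 : b1 0 = x1 := by rw [hb1, coe_basisOfLinearIndependentOfCardEqFinrank]; rfl
  have hb11 : b1 1 = y1 := by rw [hb1, coe_basisOfLinearIndependentOfCardEqFinrank]; rfl
  have hb20 : b2 0 = x2 := by rw [hb2, coe_basisOfLinearIndependentOfCardEqFinrank]; rfl
  have hb21 : b2 1 = y2 := by rw [hb2, coe_basisOfLinearIndependentOfCardEqFinrank]; rfl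
  refine ⟨b1, b2, ?_, ?_⟩
  · rw [hb10, hb11, hb20, hb21, ← hE, ← hF, hspan]
  · intro v hv hprod
    rw [hb10, hb11, hb20, hb21, ← hE, ← hF]
    obtain ⟨a, b, hab⟩ := Submodule.mem_span_pair.mp (hspan ▸ hv : v ∈ Submodule.span ℂ {E, F})
    have hqv : q v = 0 := (hq v).mpr hprod
    have hcomp : q v = a * b * polar q E F := by
      rw [← hab]
      have h4 : q (a • E + b • F) = q (a • E) + q (b • F) + polar q (a • E) (b • F) := by
        rw [QuadraticMap.polar]; ring
      rw [h4, QuadraticMap.map_smul, QuadraticMap.map_smul, polar_smul_left, polar_smul_right,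
        hqE, hqF]
      simp only [smul_eq_mul]
      ring
    rw [hqv] at hcomp
    rcases mul_eq_zero.mp hcomp.symm with h | h
    · rcases mul_eq_zero.mp h with h' | h'
      · exact ⟨b, Or.inr (by rw [← hab, h']; simp)⟩
      · exact ⟨a, Or.inl (by rw [← hab, h']; simp)⟩
    · exact absurd h hEF
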